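/- Let rc, cw, cc be positive real numbers and t₀ a real number. There exists a unique differentiable function e : [t₀, ∞) → ℝ with e(t₀) = 0 and e'(t) = cc·(cc/2 + e(t))/(rc + cw + cc + e(t)) for all t ≥ t₀. Moreover e is strictly increasing, e(t) ≥ 0 for all t ≥ t₀, and e(t) ≤ cc·(t − t₀) for all t ≥ t₀. -/

import Mathlib

open Set Filter Real
open scoped Topology NNReal

/-- A solution of the expansion ODE starting at `0` stays nonnegative. -/
lemma expansion_sol_nonneg {c K t₀ : ℝ} (hc : 0 < c) (hK : 0 < K) (f : ℝ → ℝ)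
    (h0 : f t₀ = 0)
    (hf : ∀ t ∈ Set.Ici t₀, HasDerivWithinAt f (c * (c / 2 + f t) / (K + f t)) (Set.Ici t₀) t) :
    ∀ t ∈ Set.Ici t₀, 0 ≤ f t := by
  intro u hu
  by_contra hneg
  push_neg at hneg
  have hcont : ContinuousOn f (Set.Ici t₀) := fun t ht => (hf t ht).continuousWithinAt
  set A : Set ℝ := Set.Icc t₀ u ∩ f ⁻¹' (Set.Ici 0) with hA
  have hA0 : t₀ ∈ A := ⟨⟨le_rfl, hu⟩, by simp [h0]⟩
  have hAne : A.Nonempty := ⟨t₀, hA0⟩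
  have hAbdd : BddAbove A := ⟨u, fun t ht => ht.1.2⟩
  have hAclosed : IsClosed A := by
    apply ContinuousOn.preimage_isClosed_of_isClosed
      (hcont.mono (Set.Icc_subset_Ici_self)) isClosed_Icc isClosed_Ici
  have hτA : sSup A ∈ A := hAclosed.csSup_mem hAne hAbdd
  set τ := sSup A with hτ
  have hτ0 : 0 ≤ f τ := hτA.2
  have hτt₀ : t₀ ≤ τ := hτA.1.1
  have hτu : τ < u := lt_of_le_of_ne hτA.1.2 (fun h => absurd hτ0 (by rw [h]; exact not_le.2 hneg))
  -- derivative of f at τ within Ici τ is positive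
  have hd : 0 < c * (c / 2 + f τ) / (K + f τ) := by positivity
  have hderiv : HasDerivWithinAt f (c * (c / 2 + f τ) / (K + f τ)) (Set.Ici τ) τ :=
    (hf τ hτt₀).mono (Set.Ici_subset_Ici.2 hτt₀)
  have hslope : Filter.Tendsto (slope f τ) (𝓝[>] τ) (𝓝 (c * (c / 2 + f τ) / (K + f τ))) := by
    have := hasDerivWithinAt_iff_tendsto_slope.1 hderiv
    rwa [Set.Ici_sdiff_left] at this
  have h1 : ∀ᶠ t in 𝓝[>] τ, 0 < slope f τ t := hslope.eventually (lt_mem_nhds hd)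
  have h2 : ∀ᶠ t in 𝓝[>] τ, t < u :=
    eventually_nhdsWithin_of_eventually_nhds (Filter.Tendsto.eventually_lt_const hτu tendsto_id)
  have h3 : ∀ᶠ t in 𝓝[>] τ, t ∈ Set.Ioi τ := self_mem_nhdsWithin
  obtain ⟨t, ht1, ht2, ht3⟩ := (h1.and (h2.and h3)).exists
  have htτ : τ < t := ht3
  have hft : 0 < f t := by
    have := ht1
    rw [slope_def_field] at this
    have h4 : 0 < t - τ := by linarith
    have := mul_pos this h4
    rw [div_mul_cancel₀] at this
    · linarith
    · exact ne_of_gt h4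
  have : t ∈ A := ⟨⟨le_trans hτt₀ htτ.le, ht2.le⟩, le_of_lt hft⟩
  exact absurd (le_csSup hAbdd this) (not_le.2 htτ)

/-- Existence, uniqueness and basic properties of the expansion function,
solution of the expansion differential equation. -/
theorem expansion_ode_solution
    (rc cw cc t₀ : ℝ) (hrc : 0 < rc) (hcw : 0 < cw) (hcc : 0 < cc) :
    ∃ e : ℝ → ℝ,
      (e t₀ = 0 ∧
        (∀ t ∈ Set.Ici t₀,
          HasDerivWithinAt e
            (cc * (cc / 2 + e t) / (rc + cw + cc + e t)) (Set.Ici t₀) t) ∧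
        StrictMonoOn e (Set.Ici t₀) ∧
        (∀ t ∈ Set.Ici t₀, 0 ≤ e t) ∧
        (∀ t ∈ Set.Ici t₀, e t ≤ cc * (t - t₀))) ∧
      ∀ e' : ℝ → ℝ,
        (e' t₀ = 0 ∧
          ∀ t ∈ Set.Ici t₀,
            HasDerivWithinAt e'
              (cc * (cc / 2 + e' t) / (rc + cw + cc + e' t)) (Set.Ici t₀) t) →
        ∀ t ∈ Set.Ici t₀, e' t = e t := by
  have hK : 0 < rc + cw + cc := by linarith
  set q : ℝ := rc + cw + cc - cc / 2 with hq_def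
  have hq : 0 < q := by simp only [hq_def]; linarith
  set G : ℝ → ℝ := fun s => (cc / 2 * (Real.exp s - 1) + q * s) / cc with hG_def
  have hG' : ∀ s, HasDerivAt G ((cc / 2 * Real.exp s + q) / cc) s := by
    intro s
    have h1 : HasDerivAt (fun s => cc / 2 * (Real.exp s - 1) + q * s)
        (cc / 2 * Real.exp s + q * 1) s :=
      (((Real.hasDerivAt_exp s).sub_const 1).const_mul (cc / 2)).add
        ((hasDerivAt_id s).const_mul q)
    simpa [mul_one] using h1.div_const cc
  have hGdpos : ∀ s, 0 < (cc / 2 * Real.exp s + q) / cc := fun s => by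
    have := Real.exp_pos s; positivity
  have hGmono : StrictMono G := strictMono_of_hasDerivAt_pos hG' hGdpos
  have hG0 : G 0 = 0 := by simp [hG_def]
  have hGcont : Continuous G := by
    rw [continuous_iff_continuousAt]; exact fun s => (hG' s).continuousAt
  have hGtop : Tendsto G atTop atTop := by
    have hle : ∀ s, (q * s - cc / 2) / cc ≤ G s := by
      intro s
      simp only [hG_def]
      gcongr
      nlinarith [Real.exp_pos s]
    apply tendsto_atTop_mono hle
    apply Tendsto.atTop_div_const hcc
    apply tendsto_atTop_add_const_right
    exact (tendsto_id.const_mul_atTop hq)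
  have hGbot : Tendsto G atBot atBot := by
    have hle : ∀ᶠ s in atBot, G s ≤ q * s / cc := by
      filter_upwards [eventually_le_atBot (0 : ℝ)] with s hs
      simp only [hG_def]
      gcongr
      nlinarith [Real.exp_le_one_iff.2 hs]
    apply tendsto_atBot_mono' _ hle
    apply Tendsto.atBot_div_const hcc
    exact (tendsto_id.const_mul_atBot hq)
  have hGsurj : Function.Surjective G := hGcont.surjective hGtop hGbot
  set iso := StrictMono.orderIsoOfSurjective G hGmono hGsurj with hiso_def
  set S : ℝ → ℝ := fun x => iso.symm x with hS_def
  have hGS : ∀ x, G (S x) = x := fun x =>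
    StrictMono.orderIsoOfSurjective_self_symm_apply G hGmono hGsurj x
  have hS0 : S 0 = 0 := by
    have := StrictMono.orderIsoOfSurjective_symm_apply_self G hGmono hGsurj 0
    rw [hG0] at this; exact this
  have hScont : Continuous S := OrderIso.continuous iso.symm
  have hSmono : StrictMono S := iso.symm.strictMono
  have hSd : ∀ x, HasDerivAt S ((cc / 2 * Real.exp (S x) + q) / cc)⁻¹ x := by
    intro x
    exact HasDerivAt.of_local_left_inverse hScont.continuousAt (hG' (S x))
      (ne_of_gt (hGdpos (S x))) (Filter.Eventually.of_forall hGS)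
  set e : ℝ → ℝ := fun t => cc / 2 * (Real.exp (S (t - t₀)) - 1) with he_def
  have he0 : e t₀ = 0 := by simp [he_def, hS0]
  have heden : ∀ t : ℝ, rc + cw + cc + e t = cc / 2 * Real.exp (S (t - t₀)) + q := by
    intro t; simp only [he_def, hq_def]; ring
  have hedenpos : ∀ t : ℝ, 0 < rc + cw + cc + e t := by
    intro t; rw [heden t]; have := Real.exp_pos (S (t - t₀)); positivity
  have hederiv : ∀ t : ℝ, HasDerivAt e (cc * (cc / 2 + e t) / (rc + cw + cc + e t)) t := by
    intro t
    have h1 : HasDerivAt (fun t : ℝ => t - t₀) 1 t := (hasDerivAt_id t).sub_const t₀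
    have h2 : HasDerivAt (fun t : ℝ => S (t - t₀))
        (((cc / 2 * Real.exp (S (t - t₀)) + q) / cc)⁻¹ * 1) t :=
      (hSd (t - t₀)).comp t h1
    have h3 := ((h2.exp).sub_const 1).const_mul (cc / 2)
    refine h3.congr_deriv ?_
    set E := Real.exp (S (t - t₀)) with hE_def
    have hE : 0 < E := Real.exp_pos _
    have hden : cc / 2 * E + q ≠ 0 := by positivity
    rw [show cc / 2 + e t = cc / 2 * E by simp only [he_def, ← hE_def]; ring,
      heden t]
    field_simp
    ring
  have hemono : StrictMono e := by
    intro a b hab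
    have h1 : S (a - t₀) < S (b - t₀) := hSmono (by linarith)
    have h2 : Real.exp (S (a - t₀)) < Real.exp (S (b - t₀)) := Real.exp_lt_exp.2 h1
    simp only [he_def]
    nlinarith
  have henonneg : ∀ t ∈ Set.Ici t₀, 0 ≤ e t := by
    intro t ht
    have h1 : (0 : ℝ) ≤ t - t₀ := by simpa using sub_nonneg.2 (Set.mem_Ici.1 ht)
    have h2 : S 0 ≤ S (t - t₀) := hSmono.monotone h1
    rw [hS0] at h2
    have h3 : 1 ≤ Real.exp (S (t - t₀)) := Real.one_le_exp h2
    simp only [he_def]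
    nlinarith
  have hebound : ∀ t ∈ Set.Ici t₀, e t ≤ cc * (t - t₀) := by
    intro t ht
    have h1 : (0 : ℝ) ≤ t - t₀ := sub_nonneg.2 ht
    have h2 : S 0 ≤ S (t - t₀) := hSmono.monotone h1
    rw [hS0] at h2
    have h3 : (cc / 2 * (Real.exp (S (t - t₀)) - 1) + q * S (t - t₀)) / cc = t - t₀ := by
      have := hGS (t - t₀); simpa [hG_def] using this
    have h4 := (div_eq_iff (ne_of_gt hcc)).1 h3
    simp only [he_def]
    nlinarith [mul_nonneg hq.le h2]
  refine ⟨e, ⟨he0, fun t _ => (hederiv t).hasDerivWithinAt, hemono.strictMonoOn _,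
    henonneg, hebound⟩, ?_⟩
  -- uniqueness
  rintro e' ⟨he'0, he'd⟩ T hT
  have he'nonneg : ∀ t ∈ Set.Ici t₀, 0 ≤ e' t :=
    expansion_sol_nonneg hcc hK e' he'0 he'd
  -- set up the uniqueness theorem
  set v : ℝ → ℝ → ℝ := fun _ x => cc * (cc / 2 + x) / (rc + cw + cc + x) with hv_def
  set L : ℝ≥0 := Real.toNNReal (cc * q / (rc + cw + cc) ^ 2) with hL_def
  have hw : ∀ x : ℝ, x ∈ Set.Ici (0 : ℝ) →
      HasDerivAt (fun x => cc * (cc / 2 + x) / (rc + cw + cc + x))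
        (cc * q / (rc + cw + cc + x) ^ 2) x := by
    intro x hx
    have hx0 : (0 : ℝ) ≤ x := hx
    have hdx : rc + cw + cc + x ≠ 0 := by positivity
    have hnum : HasDerivAt (fun x : ℝ => cc * (cc / 2 + x)) (cc * 1) x :=
      ((hasDerivAt_id x).const_add (cc / 2)).const_mul cc
    have hden : HasDerivAt (fun x : ℝ => rc + cw + cc + x) 1 x :=
      (hasDerivAt_id x).const_add (rc + cw + cc)
    have := hnum.div hden hdx
    refine this.congr_deriv ?_
    rw [hq_def]
    ring
  have hLip : ∀ t : ℝ, LipschitzOnWith L (v t) (Set.Ici (0 : ℝ)) := by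
    intro t
    apply Convex.lipschitzOnWith_of_nnnorm_hasDerivWithin_le (convex_Ici 0)
      (fun x hx => (hw x hx).hasDerivWithinAt)
    intro x hx
    have hx0 : (0 : ℝ) ≤ x := hx
    have hpos : (0 : ℝ) < rc + cw + cc + x := by positivity
    have hval : (0 : ℝ) ≤ cc * q / (rc + cw + cc + x) ^ 2 := by positivity
    rw [← NNReal.coe_le_coe, coe_nnnorm, Real.norm_eq_abs, abs_of_nonneg hval, hL_def,
      Real.coe_toNNReal _ (by positivity)]
    exact div_le_div_of_nonneg_left (by positivity) (by positivity) (by nlinarith)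
  have key : Set.EqOn e' e (Set.Icc t₀ T) := by
    apply ODE_solution_unique_of_mem_Icc_right (fun t _ => hLip t)
    · exact fun t ht => ((he'd t ht.1).continuousWithinAt).mono Set.Icc_subset_Ici_self
    · exact fun t ht => (he'd t ht.1).mono (Set.Ici_subset_Ici.2 ht.1)
    · exact fun t ht => he'nonneg t ht.1
    · exact fun t ht => ((hederiv t).continuousAt.continuousWithinAt)
    · exact fun t ht => (hederiv t).hasDerivWithinAt
    · exact fun t ht => henonneg t ht.1
    · rw [he'0, he0]
  exact key ⟨hT, le_rfl⟩
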